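/- Let G and H be topological groups, U ⊆ G and V ⊆ H open subsets, and E a locally convex space. If f : U × V → E is C^{1,1}, then f is C¹ as a map on the open subset U × V of the product group G × H, where continuous one-parameter subgroups of G × H are identified with pairs (γ,η) ∈ 𝔏(G) × 𝔏(H); moreover, for all (x,y) ∈ U × V, γ ∈ 𝔏(G), η ∈ 𝔏(H), df((x,y),(γ,η)) = d^{(0,1)}f(x,y,η) + d^{(1,0)}f(x,y,γ). -/

import Mathlib

open Filter Topology Set

/-- The set of continuous one-parameter subgroups `γ : (ℝ,+) → G`, as a subtype of `C(ℝ, G)`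
(hence endowed with the compact-open topology). -/
abbrev OneParam (G : Type*) [TopologicalSpace G] [Group G] : Type _ :=
  {γ : C(ℝ, G) // ∀ s t : ℝ, γ (s + t) = γ s * γ t}

/-- `D_γ f(x) = v`, i.e. `(1/t)(f(x·γ(t)) − f(x)) → v` as `t → 0`. -/
def HasDirDeriv {G E : Type*} [TopologicalSpace G] [Group G]
    [AddCommGroup E] [Module ℝ E] [TopologicalSpace E]
    (f : G → E) (x : G) (γ : OneParam G) (v : E) : Prop :=
  Tendsto (fun t : ℝ => t⁻¹ • (f (x * γ.1 t) - f x)) (𝓝[≠] (0 : ℝ)) (𝓝 v)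

/-- First component of a one-parameter subgroup of `G × H` (part of the canonical
identification `𝔏(G × H) ≅ 𝔏(G) × 𝔏(H)`). -/
def OPfst {G H : Type*} [TopologicalSpace G] [Group G] [TopologicalSpace H] [Group H]
    (ψ : OneParam (G × H)) : OneParam G :=
  ⟨⟨fun t => (ψ.1 t).1, continuous_fst.comp ψ.1.continuous⟩,
    fun s t => by simpa using congrArg Prod.fst (ψ.2 s t)⟩

/-- Second component of a one-parameter subgroup of `G × H` (part of the canonical
identification `𝔏(G × H) ≅ 𝔏(G) × 𝔏(H)`). -/
def OPsnd {G H : Type*} [TopologicalSpace G] [Group G] [TopologicalSpace H] [Group H]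
    (ψ : OneParam (G × H)) : OneParam H :=
  ⟨⟨fun t => (ψ.1 t).2, continuous_snd.comp ψ.1.continuous⟩,
    fun s t => by simpa using congrArg Prod.snd (ψ.2 s t)⟩

lemma OneParam.apply_zero' {G : Type*} [TopologicalSpace G] [Group G] (γ : OneParam G) :
    γ.1 0 = 1 := by
  have h := γ.2 0 0
  rw [add_zero] at h
  exact (left_eq_mul.mp h)

/-- Key lemma: the "partial part" converges, C^{0,1} with jointly continuous differential. -/
lemma partial_tendsto
    {G H E : Type*} [Group G] [TopologicalSpace G] [IsTopologicalGroup G]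
    [Group H] [TopologicalSpace H] [IsTopologicalGroup H]
    [AddCommGroup E] [Module ℝ E] [TopologicalSpace E] [IsTopologicalAddGroup E]
    [ContinuousSMul ℝ E] [LocallyConvexSpace ℝ E] [T2Space E]
    {U : Set G} {V : Set H} (hU : IsOpen U) (hV : IsOpen V)
    {f : G → H → E} {d01 : G → H → OneParam H → E}
    (hf : ContinuousOn (fun p : G × H => f p.1 p.2) (U ×ˢ V))
    (hd01 : ∀ x ∈ U, ∀ y ∈ V, ∀ η : OneParam H,
      HasDirDeriv (f x) y η (d01 x y η))
    (hd01c : ContinuousOn (fun p : G × H × OneParam H => d01 p.1 p.2.1 p.2.2)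
      (U ×ˢ V ×ˢ (univ : Set (OneParam H))))
    {x : G} (hx : x ∈ U) {y : H} (hy : y ∈ V) (γ : OneParam G) (η : OneParam H) :
    Tendsto (fun t : ℝ => t⁻¹ • (f (x * γ.1 t) (y * η.1 t) - f (x * γ.1 t) y))
      (𝓝[≠] (0 : ℝ)) (𝓝 (d01 x y η)) := by
  have hγ0 : γ.1 0 = 1 := γ.apply_zero'
  have hη0 : η.1 0 = 1 := η.apply_zero'
  rw [tendsto_def]
  intro N hN
  obtain ⟨C, hCmem, hCclosed, hCN⟩ := exists_mem_nhds_isClosed_subset hN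
  obtain ⟨W, ⟨hWmem, hWconv⟩, hWC⟩ :=
    (LocallyConvexSpace.convex_basis (𝕜 := ℝ) (d01 x y η)).mem_iff.mp hCmem
  -- joint continuity of Φ(t,s) = d01 (x*γ t) (y*η s) η at (0,0)
  have hcont3 : ContinuousAt (fun p : G × H × OneParam H => d01 p.1 p.2.1 p.2.2)
      (x, y, η) :=
    hd01c.continuousAt ((hU.prod (hV.prod isOpen_univ)).mem_nhds (by simp [hx, hy]))
  have hmapc : Continuous (fun ts : ℝ × ℝ =>
      ((x * γ.1 ts.1, y * η.1 ts.2, η) : G × H × OneParam H)) := by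
    refine Continuous.prodMk ?_ (Continuous.prodMk ?_ continuous_const)
    · exact continuous_const.mul (γ.1.continuous.comp continuous_fst)
    · exact continuous_const.mul (η.1.continuous.comp continuous_snd)
  have hΦ : ContinuousAt (fun ts : ℝ × ℝ => d01 (x * γ.1 ts.1) (y * η.1 ts.2) η)
      ((0 : ℝ), (0 : ℝ)) := by
    have h' : ContinuousAt (fun p : G × H × OneParam H => d01 p.1 p.2.1 p.2.2)
        (x * γ.1 0, y * η.1 0, η) := by
      rw [hγ0, hη0, mul_one, mul_one]; exact hcont3
    have hcomp := ContinuousAt.comp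
      (f := fun ts : ℝ × ℝ => ((x * γ.1 ts.1, y * η.1 ts.2, η) : G × H × OneParam H))
      (x := ((0:ℝ), (0:ℝ))) h' hmapc.continuousAt
    exact hcomp
  have hΩ : {ts : ℝ × ℝ | x * γ.1 ts.1 ∈ U ∧ y * η.1 ts.2 ∈ V ∧
      d01 (x * γ.1 ts.1) (y * η.1 ts.2) η ∈ W} ∈ 𝓝 ((0 : ℝ), (0 : ℝ)) := by
    have h1 : {ts : ℝ × ℝ | x * γ.1 ts.1 ∈ U} ∈ 𝓝 ((0:ℝ), (0:ℝ)) := by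
      apply (continuous_const.mul (γ.1.continuous.comp continuous_fst)).continuousAt.preimage_mem_nhds
      show U ∈ 𝓝 (x * γ.1 0)
      rw [hγ0, mul_one]; exact hU.mem_nhds hx
    have h2 : {ts : ℝ × ℝ | y * η.1 ts.2 ∈ V} ∈ 𝓝 ((0:ℝ), (0:ℝ)) := by
      apply (continuous_const.mul (η.1.continuous.comp continuous_snd)).continuousAt.preimage_mem_nhds
      show V ∈ 𝓝 (y * η.1 0)
      rw [hη0, mul_one]; exact hV.mem_nhds hy
    have h3 : {ts : ℝ × ℝ | d01 (x * γ.1 ts.1) (y * η.1 ts.2) η ∈ W}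
        ∈ 𝓝 ((0:ℝ), (0:ℝ)) := by
      apply hΦ.preimage_mem_nhds
      rwa [hγ0, hη0, mul_one, mul_one]
    filter_upwards [h1, h2, h3] with ts ha hb hc
    exact ⟨ha, hb, hc⟩
  obtain ⟨δ, hδpos, hball⟩ := Metric.mem_nhds_iff.mp hΩ
  have hin : ∀ t s : ℝ, |t| < δ → |s| < δ →
      (x * γ.1 t ∈ U ∧ y * η.1 s ∈ V ∧ d01 (x * γ.1 t) (y * η.1 s) η ∈ W) := by
    intro t s ht hs
    have hmemb : ((t, s) : ℝ × ℝ) ∈ Metric.ball ((0:ℝ), (0:ℝ)) δ := by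
      rw [Metric.mem_ball, Prod.dist_eq]
      simp only [Real.dist_eq, sub_zero]
      exact max_lt ht hs
    exact hball hmemb
  have hδ' : ∀ᶠ t in 𝓝[≠] (0:ℝ), |t| < δ := by
    apply eventually_nhdsWithin_of_eventually_nhds
    have := Metric.ball_mem_nhds (0:ℝ) hδpos
    filter_upwards [this] with t ht
    simpa [Real.dist_eq] using ht
  have key : ∀ t : ℝ, t ≠ 0 → |t| < δ →
      t⁻¹ • (f (x * γ.1 t) (y * η.1 t) - f (x * γ.1 t) y) ∈ N := by
    intro t ht0 htδ
    set x' := x * γ.1 t with hx'def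
    have hx'U : x' ∈ U := (hin t 0 htδ (by simpa using hδpos)).1
    set v := d01 x y η with hvdef
    set S := (fun s : ℝ => d01 x' (y * η.1 (s * t)) η) '' Ioo (0:ℝ) 1 with hSdef
    have habs : ∀ s ∈ Icc (0:ℝ) 1, |s * t| < δ := by
      intro s hs
      rw [abs_mul]
      calc |s| * |t| ≤ 1 * |t| := by
            apply mul_le_mul_of_nonneg_right _ (abs_nonneg t)
            rw [abs_le]; exact ⟨by linarith [hs.1], hs.2⟩
        _ = |t| := one_mul _
        _ < δ := htδ
    have hVmem : ∀ s ∈ Icc (0:ℝ) 1, y * η.1 (s * t) ∈ V := fun s hs =>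
      (hin t (s * t) htδ (habs s hs)).2.1
    have hSW : S ⊆ W := by
      rintro _ ⟨s, hs, rfl⟩
      exact (hin t (s * t) htδ (habs s (Ioo_subset_Icc_self hs))).2.2
    have hmem : t⁻¹ • (f x' (y * η.1 t) - f x' y) ∈ closure (convexHull ℝ S) := by
      by_contra hc
      obtain ⟨lam, u, hlt, hgt⟩ := geometric_hahn_banach_closed_point
        (convex_convexHull ℝ S).closure isClosed_closure hc
      set φ : ℝ → ℝ := fun s => lam (f x' (y * η.1 (s * t))) with hφdef
      have hφc : ContinuousOn φ (Icc 0 1) := by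
        apply lam.continuous.comp_continuousOn
        have hmc : Continuous fun s : ℝ => ((x', y * η.1 (s * t)) : G × H) := by
          refine Continuous.prodMk continuous_const
            (continuous_const.mul (η.1.continuous.comp ?_))
          exact continuous_id.mul continuous_const
        exact hf.comp hmc.continuousOn fun s hs => mk_mem_prod hx'U (hVmem s hs)
      have hφd : ∀ s ∈ Ioo (0:ℝ) 1,
          HasDerivAt φ (t * lam (d01 x' (y * η.1 (s * t)) η)) s := by
        intro s₀ hs₀
        set y₀ := y * η.1 (s₀ * t) with hy₀def
        have hy₀V : y₀ ∈ V := hVmem s₀ (Ioo_subset_Icc_self hs₀)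
        have T := hd01 x' hx'U y₀ hy₀V η
        rw [hasDerivAt_iff_tendsto_slope]
        have hm : Tendsto (fun s : ℝ => (s - s₀) * t) (𝓝[≠] s₀) (𝓝[≠] (0:ℝ)) := by
          rw [tendsto_nhdsWithin_iff]
          constructor
          · have : Tendsto (fun s : ℝ => (s - s₀) * t) (𝓝 s₀) (𝓝 ((s₀ - s₀) * t)) := by
              exact ((continuous_id.sub continuous_const).mul continuous_const).continuousAt
            rw [sub_self, zero_mul] at this
            exact this.mono_left nhdsWithin_le_nhds
          · filter_upwards [eventually_mem_nhdsWithin] with s hs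
            simp only [mem_compl_iff, mem_singleton_iff] at hs ⊢
            exact mul_ne_zero (sub_ne_zero.2 hs) ht0
        have T2 : Tendsto (fun τ : ℝ => t * lam (τ⁻¹ • (f x' (y₀ * η.1 τ) - f x' y₀)))
            (𝓝[≠] (0:ℝ)) (𝓝 (t * lam (d01 x' y₀ η))) :=
          ((lam.continuous.tendsto _).comp T).const_mul t
        refine (T2.comp hm).congr' ?_
        filter_upwards [eventually_mem_nhdsWithin] with s hs
        have hs' : s ≠ s₀ := hs
        have hprod : y₀ * η.1 ((s - s₀) * t) = y * η.1 (s * t) := by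
          rw [hy₀def, mul_assoc, ← η.2]
          congr 2
          ring
        simp only [Function.comp_apply, hprod, map_smul, smul_eq_mul, map_sub]
        rw [slope_def_field, hφdef]
        simp only
        rw [← hy₀def]
        have h2 : s - s₀ ≠ 0 := sub_ne_zero.2 hs'
        have h1 : (s - s₀) * t ≠ 0 := mul_ne_zero h2 ht0
        field_simp
      obtain ⟨c, hc1, hc2⟩ := exists_hasDerivAt_eq_slope φ _ zero_lt_one hφc hφd
      have hd01mem : d01 x' (y * η.1 (c * t)) η ∈ closure (convexHull ℝ S) :=
        subset_closure (subset_convexHull ℝ S ⟨c, hc1, rfl⟩)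
      have h1 := hlt _ hd01mem
      have heq : lam (t⁻¹ • (f x' (y * η.1 t) - f x' y)) = lam (d01 x' (y * η.1 (c * t)) η) := by
        have hφ1 : φ 1 = lam (f x' (y * η.1 t)) := by rw [hφdef]; norm_num
        have hφ0 : φ 0 = lam (f x' y) := by rw [hφdef]; simp [hη0]
        rw [map_smul, map_sub, smul_eq_mul]
        rw [sub_zero, div_one, hφ1, hφ0] at hc2
        field_simp [← hc2]
        rw [mul_comm t c, hc2]
      rw [heq] at hgt
      linarith
    have hsub : closure (convexHull ℝ S) ⊆ C := by
      refine hCclosed.closure_subset_iff.mpr ?_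
      exact (convexHull_min hSW hWconv).trans hWC
    exact hCN (hsub hmem)
  filter_upwards [hδ', eventually_mem_nhdsWithin] with t htδ ht0
  exact key t ht0 htδ

/-- If `f : U × V → E` is `C^{1,1}` (with partial derivative maps `d10`, `d01`,
`d11`), then `f` is `C¹` on the open subset `U × V` of the product group `G × H`, where
one-parameter subgroups `ψ ∈ 𝔏(G × H)` correspond to pairs `(γ,η) ∈ 𝔏(G) × 𝔏(H)`, and
`df((x,y),(γ,η)) = d^{(0,1)}f(x,y,η) + d^{(1,0)}f(x,y,γ)`. -/
theorem isC1_of_isC11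
    {G H E : Type*} [Group G] [TopologicalSpace G] [IsTopologicalGroup G]
    [Group H] [TopologicalSpace H] [IsTopologicalGroup H]
    [AddCommGroup E] [Module ℝ E] [TopologicalSpace E] [IsTopologicalAddGroup E]
    [ContinuousSMul ℝ E] [LocallyConvexSpace ℝ E] [T2Space E]
    (U : Set G) (V : Set H) (hU : IsOpen U) (hV : IsOpen V)
    (f : G → H → E)
    (d10 : G → H → OneParam G → E) (d01 : G → H → OneParam H → E)
    (d11 : G → H → OneParam G → OneParam H → E)
    (hf : ContinuousOn (fun p : G × H => f p.1 p.2) (U ×ˢ V))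
    (hd10 : ∀ x ∈ U, ∀ y ∈ V, ∀ γ : OneParam G,
      HasDirDeriv (fun x' => f x' y) x γ (d10 x y γ))
    (hd10c : ContinuousOn (fun p : G × H × OneParam G => d10 p.1 p.2.1 p.2.2)
      (U ×ˢ V ×ˢ (univ : Set (OneParam G))))
    (hd01 : ∀ x ∈ U, ∀ y ∈ V, ∀ η : OneParam H,
      HasDirDeriv (f x) y η (d01 x y η))
    (hd01c : ContinuousOn (fun p : G × H × OneParam H => d01 p.1 p.2.1 p.2.2)
      (U ×ˢ V ×ˢ (univ : Set (OneParam H))))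
    (hd11 : ∀ x ∈ U, ∀ y ∈ V, ∀ (γ : OneParam G) (η : OneParam H),
      HasDirDeriv (fun x' => d01 x' y η) x γ (d11 x y γ η))
    (hd11c : ContinuousOn
      (fun p : G × H × OneParam G × OneParam H => d11 p.1 p.2.1 p.2.2.1 p.2.2.2)
      (U ×ˢ V ×ˢ (univ : Set (OneParam G × OneParam H)))) :
    (∀ x ∈ U, ∀ y ∈ V, ∀ ψ : OneParam (G × H),
      HasDirDeriv (fun p : G × H => f p.1 p.2) (x, y) ψ
        (d01 x y (OPsnd ψ) + d10 x y (OPfst ψ))) ∧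
    ContinuousOn
      (fun q : (G × H) × OneParam (G × H) =>
        d01 q.1.1 q.1.2 (OPsnd q.2) + d10 q.1.1 q.1.2 (OPfst q.2))
      ((U ×ˢ V) ×ˢ (univ : Set (OneParam (G × H)))) := by
  have hOPs : Continuous (OPsnd (G := G) (H := H)) := by
    apply Continuous.subtype_mk
    exact (ContinuousMap.continuous_postcomp ⟨Prod.snd, continuous_snd⟩).comp
      continuous_subtype_val
  constructor
  · intro x hx y hy ψ
    have hA := partial_tendsto hU hV hf hd01 hd01c hx hy (OPfst ψ) (OPsnd ψ)
    have hB := hd10 x hx y hy (OPfst ψ)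
    unfold HasDirDeriv at hB
    have hsum := hA.add hB
    have heq : ∀ t : ℝ,
        t⁻¹ • (f (x * (OPfst ψ).1 t) (y * (OPsnd ψ).1 t) - f (x * (OPfst ψ).1 t) y)
          + t⁻¹ • (f (x * (OPfst ψ).1 t) y - f x y)
        = t⁻¹ • (f (x * (OPfst ψ).1 t) (y * (OPsnd ψ).1 t) - f x y) := by
      intro t
      rw [← smul_add, sub_add_sub_cancel]
    exact hsum.congr heq
  · have hm : Continuous (fun q : (G × H) × OneParam (G × H) =>
        ((q.1.1, q.1.2, OPsnd q.2) : G × H × OneParam H)) :=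
      (continuous_fst.fst).prodMk
        ((continuous_fst.snd).prodMk (hOPs.comp continuous_snd))
    have hOPf : Continuous (OPfst (G := G) (H := H)) := by
      apply Continuous.subtype_mk
      exact (ContinuousMap.continuous_postcomp ⟨Prod.fst, continuous_fst⟩).comp
        continuous_subtype_val
    have hm' : Continuous (fun q : (G × H) × OneParam (G × H) =>
        ((q.1.1, q.1.2, OPfst q.2) : G × H × OneParam G)) :=
      (continuous_fst.fst).prodMk
        ((continuous_fst.snd).prodMk (hOPf.comp continuous_snd))
    have hmaps1 : MapsTo (fun q : (G × H) × OneParam (G × H) =>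
        ((q.1.1, q.1.2, OPsnd q.2) : G × H × OneParam H))
        ((U ×ˢ V) ×ˢ univ) (U ×ˢ V ×ˢ (univ : Set (OneParam H))) := by
      rintro ⟨⟨a, b⟩, ψ⟩ ⟨⟨ha, hb⟩, -⟩
      exact ⟨ha, hb, trivial⟩
    have hmaps2 : MapsTo (fun q : (G × H) × OneParam (G × H) =>
        ((q.1.1, q.1.2, OPfst q.2) : G × H × OneParam G))
        ((U ×ˢ V) ×ˢ univ) (U ×ˢ V ×ˢ (univ : Set (OneParam G))) := by
      rintro ⟨⟨a, b⟩, ψ⟩ ⟨⟨ha, hb⟩, -⟩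
      exact ⟨ha, hb, trivial⟩
    have hc1 : ContinuousOn (fun q : (G × H) × OneParam (G × H) =>
        d01 q.1.1 q.1.2 (OPsnd q.2)) ((U ×ˢ V) ×ˢ univ) :=
      hd01c.comp hm.continuousOn hmaps1
    have hc2 : ContinuousOn (fun q : (G × H) × OneParam (G × H) =>
        d10 q.1.1 q.1.2 (OPfst q.2)) ((U ×ˢ V) ×ˢ univ) :=
      hd10c.comp hm'.continuousOn hmaps2
    exact hc1.add hc2
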